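/- For fixed integers n, m with n ≡ m (mod 2), the set of polynomials {r^l_{n,m} : l ∈ ℤ, l ≡ m (mod 2)} is finite, where r^l_{n,m} := (q_{n,m} · q_{l,n}) / q_{l,m}. -/

import Mathlib

open Polynomial

/-- The generators `q_{n,m}` of the Paley–Wiener–Schwartz spaces for `SL(2,ℝ)`. -/
noncomputable def qpoly (n m : ℤ) : Polynomial ℂ :=
  if n = m then 1
  else if 0 ≤ n * m then
    if |m| < |n| then
      ∏ j ∈ Finset.range (((|n| - |m|) / 2).toNat),
        (X + C ((((|m| : ℤ) : ℂ) + 1) / 2 + (j : ℂ)))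
    else
      ∏ j ∈ Finset.range (((|m| - |n|) / 2).toNat),
        (X - C ((((|n| : ℤ) : ℂ) + 1) / 2 + (j : ℂ)))
  else
    ∏ j ∈ Finset.range (((|n| + |m|) / 2).toNat),
      (X + C ((((|n| : ℤ) : ℂ) - 1) / 2 - (j : ℂ)))

lemma qpoly_def (n m : ℤ) : qpoly n m =
    if n = m then 1
    else if 0 ≤ n * m then
      if |m| < |n| then
        ∏ j ∈ Finset.range (((|n| - |m|) / 2).toNat),
          (X + C ((((|m| : ℤ) : ℂ) + 1) / 2 + (j : ℂ)))
      else
        ∏ j ∈ Finset.range (((|m| - |n|) / 2).toNat),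
          (X - C ((((|n| : ℤ) : ℂ) + 1) / 2 + (j : ℂ)))
    else
      ∏ j ∈ Finset.range (((|n| + |m|) / 2).toNat),
        (X + C ((((|n| : ℤ) : ℂ) - 1) / 2 - (j : ℂ))) := rfl

lemma qpoly_monic (n m : ℤ) : (qpoly n m).Monic := by
  unfold qpoly
  split_ifs
  · exact monic_one
  · exact monic_prod_of_monic _ _ fun j _ => monic_X_add_C _
  · exact monic_prod_of_monic _ _ fun j _ => monic_X_sub_C _
  · exact monic_prod_of_monic _ _ fun j _ => monic_X_add_C _

lemma cancel_left_divByMonic (a P Q : Polynomial ℂ) (ha : a.Monic) (hQ : Q.Monic) :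
    (a * P) /ₘ (a * Q) = P /ₘ Q := by
  refine (div_modByMonic_unique (P /ₘ Q) (a * (P %ₘ Q)) (ha.mul hQ) ⟨?_, ?_⟩).1
  · have h := modByMonic_add_div P Q
    calc a * (P %ₘ Q) + a * Q * (P /ₘ Q) = a * (P %ₘ Q + Q * (P /ₘ Q)) := by ring
      _ = a * P := by rw [h]
  · rcases eq_or_ne (P %ₘ Q) 0 with h0 | h0
    · rw [h0, mul_zero, degree_zero]
      exact bot_lt_iff_ne_bot.2 (by rw [Ne, degree_eq_bot]; exact (ha.mul hQ).ne_zero)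
    · rw [degree_mul, degree_mul]
      exact WithBot.add_lt_add_left (by rw [Ne, degree_eq_bot]; exact ha.ne_zero)
        (degree_modByMonic_lt P hQ)

lemma qpoly_step_pos (n l : ℤ) (h : |n| < l) (hpar : 2 ∣ l - n) :
    qpoly (l + 2) n = (X + C (((l : ℂ) + 1) / 2)) * qpoly l n := by
  have hn1 : -l < n := by have := neg_abs_le n; omega
  have hn2 : n < l := by have := le_abs_self n; omega
  have hl : 0 < l := by have := abs_nonneg n; omega
  have e2 : |l| = l := abs_of_pos hl
  have e3 : |l + 2| = l + 2 := abs_of_pos (by omega)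
  rcases le_or_gt 0 n with hn | hn
  · -- n ≥ 0 : same-sign branch, second abs smaller
    have e1 : |n| = n := abs_of_nonneg hn
    rw [qpoly_def, qpoly_def]
    rw [if_neg (by omega : ¬ l + 2 = n), if_pos (mul_nonneg (by omega) hn),
      if_pos (by rw [e1, e3]; omega), if_neg (by omega : ¬ l = n),
      if_pos (mul_nonneg hl.le hn), if_pos (by rw [e1, e2]; omega)]
    obtain ⟨c, hc⟩ := hpar
    have hc0 : 0 ≤ c := by omega
    lift c to ℕ using hc0 with k hk
    have e4 : ((|l + 2| - |n|) / 2).toNat = ((|l| - |n|) / 2).toNat + 1 := by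
      rw [e1, e2, e3]; omega
    have e5 : ((|l| - |n|) / 2).toNat = k := by rw [e1, e2]; omega
    rw [e4, e5, Finset.prod_range_succ, mul_comm]
    congr 1
    rw [add_right_inj, C_inj]
    have hlc : (l : ℂ) = (n : ℂ) + 2 * k := by
      have : l = n + 2 * (k : ℤ) := by omega
      exact_mod_cast congrArg (Int.cast : ℤ → ℂ) this
    rw [e1, hlc]; ring
  · -- n < 0 : opposite-sign branch
    have e1 : |n| = -n := abs_of_neg hn
    rw [qpoly_def, qpoly_def]
    rw [if_neg (by omega : ¬ l + 2 = n),
      if_neg (not_le.mpr (mul_neg_of_pos_of_neg (by omega) hn)),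
      if_neg (by omega : ¬ l = n),
      if_neg (not_le.mpr (mul_neg_of_pos_of_neg hl hn))]
    have e4 : ((|l + 2| + |n|) / 2).toNat = ((|l| + |n|) / 2).toNat + 1 := by
      rw [e1, e2, e3]; omega
    rw [e4, Finset.prod_range_succ', e3]
    have hterm : ∀ j : ℕ,
        (X + C ((((l + 2 : ℤ) : ℂ) - 1) / 2 - ((j + 1 : ℕ) : ℂ)))
          = X + C ((((|l| : ℤ) : ℂ) - 1) / 2 - (j : ℂ)) := by
      intro j
      rw [add_right_inj, C_inj, e2]
      push_cast; ring
    rw [Finset.prod_congr rfl fun j _ => hterm j, mul_comm]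
    congr 1
    rw [add_right_inj, C_inj]
    push_cast; ring

lemma qpoly_step_neg (n l : ℤ) (h : l < -|n|) (hpar : 2 ∣ l - n) :
    qpoly (l - 2) n = (X + C ((1 - (l : ℂ)) / 2)) * qpoly l n := by
  have hn1 : n ≤ |n| := le_abs_self n
  have hn2 : -|n| ≤ n := neg_abs_le n
  have hl : l < 0 := by have := abs_nonneg n; omega
  have e2 : |l| = -l := abs_of_neg hl
  have e3 : |l - 2| = -(l - 2) := abs_of_neg (by omega)
  rcases lt_or_ge 0 n with hn | hn
  · -- n > 0 : opposite sign branch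
    rw [qpoly_def, qpoly_def]
    rw [if_neg (by omega : ¬ l - 2 = n),
      if_neg (not_le.mpr (mul_neg_of_neg_of_pos (by omega) hn)),
      if_neg (by omega : ¬ l = n),
      if_neg (not_le.mpr (mul_neg_of_neg_of_pos hl hn))]
    have e4 : ((|l - 2| + |n|) / 2).toNat = ((|l| + |n|) / 2).toNat + 1 := by
      rw [e2, e3]; omega
    rw [e4, Finset.prod_range_succ', e3]
    have hterm : ∀ j : ℕ,
        (X + C ((((-(l - 2) : ℤ) : ℂ) - 1) / 2 - ((j + 1 : ℕ) : ℂ)))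
          = X + C ((((|l| : ℤ) : ℂ) - 1) / 2 - (j : ℂ)) := by
      intro j
      rw [add_right_inj, C_inj, e2]
      push_cast; ring
    rw [Finset.prod_congr rfl fun j _ => hterm j, mul_comm]
    congr 1
    rw [add_right_inj, C_inj]
    push_cast; ring
  · -- n ≤ 0 : same-sign branch, |n| < |l|
    have e1 : |n| = -n := abs_of_nonpos hn
    rw [qpoly_def, qpoly_def]
    rw [if_neg (by omega : ¬ l - 2 = n),
      if_pos (by nlinarith : (0:ℤ) ≤ (l - 2) * n),
      if_pos (by rw [e1, e3]; omega),
      if_neg (by omega : ¬ l = n),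
      if_pos (by nlinarith : (0:ℤ) ≤ l * n),
      if_pos (by rw [e1, e2]; omega)]
    obtain ⟨c, hc⟩ := hpar
    have e4 : ((|l - 2| - |n|) / 2).toNat = ((|l| - |n|) / 2).toNat + 1 := by
      rw [e1, e2, e3]; omega
    rw [e4, Finset.prod_range_succ, mul_comm]
    congr 1
    rw [add_right_inj, C_inj, e1, e2]
    have h7 : (((-l - -n) / 2 : ℤ)).toNat = (-c).toNat := by omega
    rw [h7]
    have h8 : ((-c).toNat : ℤ) = -c := Int.toNat_of_nonneg (by omega)
    have hlc : ((-c).toNat : ℂ) = -(c : ℂ) := by exact_mod_cast congrArg (Int.cast : ℤ → ℂ) h8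
    rw [hlc]
    have hcc : (l : ℂ) = (n : ℂ) + 2 * (c:ℂ) := by
      have : l = n + 2 * c := by omega
      exact_mod_cast congrArg (Int.cast : ℤ → ℂ) this
    rw [hcc]; push_cast; ring

/-- The quotient `r^l_{n,m}`, defined via division by the monic `q_{l,m}`. -/
noncomputable def Fq (n m l : ℤ) : Polynomial ℂ :=
  (qpoly n m * qpoly l n) /ₘ qpoly l m

lemma Fq_step_pos (n m l : ℤ) (hn : |n| < l) (hm : |m| < l)
    (hpn : 2 ∣ l - n) (hpm : 2 ∣ l - m) : Fq n m (l + 2) = Fq n m l := by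
  unfold Fq
  rw [qpoly_step_pos n l hn hpn, qpoly_step_pos m l hm hpm,
    show qpoly n m * ((X + C (((l:ℂ) + 1) / 2)) * qpoly l n)
      = (X + C (((l:ℂ) + 1) / 2)) * (qpoly n m * qpoly l n) by ring]
  exact cancel_left_divByMonic _ _ _ (monic_X_add_C _) (qpoly_monic l m)

lemma Fq_step_neg (n m l : ℤ) (hn : l < -|n|) (hm : l < -|m|)
    (hpn : 2 ∣ l - n) (hpm : 2 ∣ l - m) : Fq n m (l - 2) = Fq n m l := by
  unfold Fq
  rw [qpoly_step_neg n l hn hpn, qpoly_step_neg m l hm hpm,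
    show qpoly n m * ((X + C ((1 - (l:ℂ)) / 2)) * qpoly l n)
      = (X + C ((1 - (l:ℂ)) / 2)) * (qpoly n m * qpoly l n) by ring]
  exact cancel_left_divByMonic _ _ _ (monic_X_add_C _) (qpoly_monic l m)

/-- For fixed `n ≡ m (mod 2)`, the set of polynomials `r^l_{n,m}` (for `l ≡ m (mod 2)`)
defined by `q_{n,m} · q_{l,n} = r^l_{n,m} · q_{l,m}` is finite. -/
theorem stmt8 (n m : ℤ) (hnm : n % 2 = m % 2) :
    {r : Polynomial ℂ | ∃ l : ℤ, l % 2 = m % 2 ∧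
      qpoly n m * qpoly l n = r * qpoly l m}.Finite := by
  set L : ℤ := (n.natAbs : ℤ) + (m.natAbs : ℤ) + 2 with hLdef
  have habsn : |n| = (n.natAbs : ℤ) := Int.abs_eq_natAbs n
  have habsm : |m| = (m.natAbs : ℤ) := Int.abs_eq_natAbs m
  have key : ∀ N : ℕ, ∀ l : ℤ, l.natAbs ≤ N → l % 2 = m % 2 →
      ∃ l' ∈ Set.Icc (-L) L, Fq n m l = Fq n m l' := by
    intro N
    induction N with
    | zero =>
      intro l h0 _
      exact ⟨l, Set.mem_Icc.mpr (by omega), rfl⟩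
    | succ N ih =>
      intro l hle hpar
      rcases le_or_gt l.natAbs L.toNat with hsmall | hbig
      · exact ⟨l, Set.mem_Icc.mpr (by omega), rfl⟩
      rcases le_or_gt 0 l with hpos | hneg
      · -- l > L, step down
        have hstep : Fq n m ((l - 2) + 2) = Fq n m (l - 2) :=
          Fq_step_pos n m (l - 2) (by rw [habsn]; omega) (by rw [habsm]; omega)
            (by omega) (by omega)
        obtain ⟨l', hl', heq⟩ := ih (l - 2) (by omega) (by omega)
        refine ⟨l', hl', ?_⟩
        rw [show l = (l - 2) + 2 by ring, hstep, heq]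
      · -- l < -L, step up
        have hstep : Fq n m ((l + 2) - 2) = Fq n m (l + 2) :=
          Fq_step_neg n m (l + 2) (by rw [habsn]; omega) (by rw [habsm]; omega)
            (by omega) (by omega)
        obtain ⟨l', hl', heq⟩ := ih (l + 2) (by omega) (by omega)
        refine ⟨l', hl', ?_⟩
        rw [show l = (l + 2) - 2 by ring, hstep, heq]
  have hsub : {r : Polynomial ℂ | ∃ l : ℤ, l % 2 = m % 2 ∧
      qpoly n m * qpoly l n = r * qpoly l m} ⊆ (Fq n m) '' (Set.Icc (-L) L) := by
    rintro r ⟨l, hl, heq⟩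
    obtain ⟨l', hl', hF⟩ := key l.natAbs l le_rfl hl
    refine ⟨l', hl', ?_⟩
    rw [← hF]
    unfold Fq
    rw [heq, mul_comm r, mul_divByMonic_cancel_left _ (qpoly_monic l m)]
  exact Set.Finite.subset (Set.Finite.image _ (Set.finite_Icc _ _)) hsub
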